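/- Let p ≥ 1 be a real number and z₁, z₂ ∈ ℂ. Define ξ(ρ) := (1 − ρ)z₂ + ρz₁ for ρ ∈ [0, 1], and interpret |w|^{p−2} w² as 0 when w = 0. Then |z₁|^{p} z₁ − |z₂|^{p} z₂ = ((p + 2)/2)(z₁ − z₂) ∫₀¹ |ξ(ρ)|^{p} dρ + (p/2)(conj(z₁) − conj(z₂)) ∫₀¹ |ξ(ρ)|^{p−2} ξ(ρ)² dρ, where conj denotes complex conjugation. -/

import Mathlib

/-- The power nonlinearity `z ↦ |z|^p z`. -/
noncomputable def powerNonlin (p : ℝ) (z : ℂ) : ℂ :=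
  ((‖z‖ ^ p : ℝ) : ℂ) * z

/-- The expression `|w|^{p−2} w²`, interpreted as `0` when `w = 0`. -/
noncomputable def powerQuad (p : ℝ) (w : ℂ) : ℂ :=
  if w = 0 then 0 else ((‖w‖ ^ (p - 2) : ℝ) : ℂ) * w ^ 2


open Complex Filter

lemma abs_powerQuad (p : ℝ) (hp : p ≠ 0) (w : ℂ) :
    ‖powerQuad p w‖ = ‖w‖ ^ p := by
  rcases eq_or_ne w 0 with h | h
  · simp [powerQuad, h, Real.zero_rpow hp]
  · have hA : 0 < ‖w‖ := norm_pos_iff.mpr h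
    rw [powerQuad, if_neg h]
    rw [norm_mul, norm_pow, Complex.norm_real, Real.norm_eq_abs,
      _root_.abs_of_nonneg (Real.rpow_nonneg (norm_nonneg w) _)]
    rw [← Real.rpow_natCast (‖w‖) 2, ← Real.rpow_add hA]
    norm_num

lemma continuous_absRpow (p : ℝ) (hp : 0 ≤ p) :
    Continuous (fun w : ℂ => ((‖w‖ ^ p : ℝ) : ℂ)) := by
  apply Complex.continuous_ofReal.comp
  apply continuous_iff_continuousAt.2
  intro w
  exact (Real.continuousAt_rpow_const _ _ (Or.inr hp)).comp continuous_norm.continuousAt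

lemma continuous_powerQuad (p : ℝ) (hp : 1 ≤ p) : Continuous (powerQuad p) := by
  have hp0 : 0 < p := lt_of_lt_of_le one_pos hp
  apply continuous_iff_continuousAt.2
  intro w
  rcases eq_or_ne w 0 with h | h
  · subst h
    have h0 : powerQuad p 0 = 0 := by simp [powerQuad]
    rw [ContinuousAt, h0, tendsto_zero_iff_norm_tendsto_zero]
    have h1 : ContinuousAt (fun x : ℝ => x ^ p) (0 : ℝ) :=
      Real.continuousAt_rpow_const _ _ (Or.inr hp0.le)
    have h2 : ContinuousAt (fun z : ℂ => ‖z‖ ^ p) (0 : ℂ) :=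
      by
        have h1' : ContinuousAt (fun x : ℝ => x ^ p) ‖(0 : ℂ)‖ := by simpa using h1
        exact h1'.comp continuous_norm.continuousAt
    have h3 : Filter.Tendsto (fun z : ℂ => ‖z‖ ^ p) (nhds 0) (nhds 0) := by
      simpa [ContinuousAt, Real.zero_rpow hp0.ne'] using h2
    refine h3.congr' ?_
    filter_upwards with z
    simp [abs_powerQuad p hp0.ne' z]
  · have hopen : IsOpen {z : ℂ | z ≠ 0} := isOpen_ne
    have hc : ContinuousAt (fun z : ℂ => ((‖z‖ ^ (p - 2) : ℝ) : ℂ) * z ^ 2) w := by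
      apply ContinuousAt.mul
      · exact Complex.continuous_ofReal.continuousAt.comp
          ((Real.continuousAt_rpow_const _ _ (Or.inl ((norm_ne_zero_iff.mpr h)))).comp
            continuous_norm.continuousAt)
      · exact (continuous_pow 2).continuousAt
    apply hc.congr
    filter_upwards [hopen.mem_nhds h] with z hz
    simp [powerQuad, hz]

/-- derivative value identity at a nonzero point -/
lemma deriv_value (p : ℝ) (w d : ℂ) (hw : w ≠ 0) :
    (((p / 2) * Complex.normSq w ^ (p / 2 - 1) * (2 * ((starRingEnd ℂ) w * d).re) : ℝ) : ℂ) * w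
      + ((‖w‖ ^ p : ℝ) : ℂ) * d
    = (((p + 2) / 2 : ℝ) : ℂ) * d * ((‖w‖ ^ p : ℝ) : ℂ)
      + ((p / 2 : ℝ) : ℂ) * (starRingEnd ℂ) d * powerQuad p w := by
  have hA : 0 < ‖w‖ := norm_pos_iff.mpr hw
  rw [powerQuad, if_neg hw]
  have h1 : Complex.normSq w ^ (p / 2 - 1) = ‖w‖ ^ (p - 2) := by
    rw [← Complex.sq_norm, ← Real.rpow_natCast (‖w‖) 2, ← Real.rpow_mul hA.le]
    norm_num
    ring_nf
  have h4 : ‖w‖ ^ (p - 2) * ‖w‖ ^ 2 = ‖w‖ ^ p := by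
    rw [← Real.rpow_natCast (‖w‖) 2, ← Real.rpow_add hA]
    norm_num
  have ha : ((‖w‖ ^ (p - 2) : ℝ) : ℂ) * (w * (starRingEnd ℂ) w)
      = ((‖w‖ ^ p : ℝ) : ℂ) := by
    rw [Complex.mul_conj, ← Complex.sq_norm, ← h4]
    push_cast
    ring
  have h2 : (((starRingEnd ℂ) w * d).re : ℂ) * 2
      = (starRingEnd ℂ) w * d + w * (starRingEnd ℂ) d := by
    have h := Complex.add_conj ((starRingEnd ℂ) w * d)
    rw [map_mul, Complex.conj_conj] at h
    push_cast at h ⊢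
    linear_combination -h
  rw [h1]
  push_cast
  linear_combination ((p : ℂ) / 2) * w * ((‖w‖ ^ (p - 2) : ℝ) : ℂ) * h2 + ((p : ℂ) / 2) * d * ha

lemma hasDerivAt_line (p : ℝ) (hp : 1 ≤ p) (z₂ d : ℂ) (ρ : ℝ) :
    HasDerivAt (fun σ : ℝ => powerNonlin p (z₂ + (σ : ℂ) * d))
      ((((p + 2) / 2 : ℝ) : ℂ) * d * ((‖z₂ + (ρ : ℂ) * d‖ ^ p : ℝ) : ℂ)
        + ((p / 2 : ℝ) : ℂ) * (starRingEnd ℂ) d * powerQuad p (z₂ + (ρ : ℂ) * d)) ρ := by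
  have hp0 : 0 < p := lt_of_lt_of_le one_pos hp
  set w : ℂ := z₂ + (ρ : ℂ) * d with hw_def
  have hξ : HasDerivAt (fun σ : ℝ => z₂ + (σ : ℂ) * d) d ρ := by
    have h0 : HasDerivAt (fun σ : ℝ => (σ : ℂ)) 1 ρ := by
      simpa using (hasDerivAt_id ρ).ofReal_comp
    simpa using (h0.mul_const d).const_add z₂
  rcases eq_or_ne w 0 with hw | hw
  · -- degenerate point: derivative is 0
    have hz₂ : z₂ = -((ρ : ℂ) * d) := by
      have h := hw; rw [hw_def] at h; linear_combination h
    have hval : (((p + 2) / 2 : ℝ) : ℂ) * d * ((‖w‖ ^ p : ℝ) : ℂ)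
        + ((p / 2 : ℝ) : ℂ) * (starRingEnd ℂ) d * powerQuad p w = 0 := by
      rw [hw]
      simp [powerQuad, Real.zero_rpow hp0.ne']
    rw [hval]
    rw [hasDerivAt_iff_tendsto_slope]
    have hslope : ∀ σ ∈ ({ρ}ᶜ : Set ℝ), slope (fun σ : ℝ => powerNonlin p (z₂ + (σ : ℂ) * d)) ρ σ
        = ((‖z₂ + (σ : ℂ) * d‖ ^ p : ℝ) : ℂ) * d := by
      intro σ hσ
      have hσρ : σ ≠ ρ := hσ
      have hc : ((σ : ℂ) - (ρ : ℂ)) ≠ 0 := by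
        rw [← Complex.ofReal_sub]
        exact_mod_cast sub_ne_zero.2 hσρ
      have hfρ : powerNonlin p (z₂ + (ρ : ℂ) * d) = 0 := by
        rw [← hw_def, hw]; simp [powerNonlin]
      rw [slope_def_module, hfρ, sub_zero, powerNonlin]
      have hz : z₂ + (σ : ℂ) * d = ((σ : ℂ) - (ρ : ℂ)) * d := by
        rw [hz₂]; ring
      rw [Complex.real_smul]
      rw [hz]
      push_cast
      field_simp
    have htend : Filter.Tendsto (fun σ : ℝ => ((‖z₂ + (σ : ℂ) * d‖ ^ p : ℝ) : ℂ) * d)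
        (nhds ρ) (nhds 0) := by
      have h1 : Filter.Tendsto (fun σ : ℝ => ‖z₂ + (σ : ℂ) * d‖ ^ p)
          (nhds ρ) (nhds 0) := by
        have hc1 : Continuous (fun σ : ℝ => ‖z₂ + (σ : ℂ) * d‖) := by
          exact continuous_norm.comp (by continuity)
        have hc2 : ContinuousAt (fun x : ℝ => x ^ p) (‖z₂ + (ρ : ℂ) * d‖) :=
          Real.continuousAt_rpow_const _ _ (Or.inr hp0.le)
        have hcc := ContinuousAt.comp (g := fun x : ℝ => x ^ p)
          (f := fun σ : ℝ => ‖z₂ + (σ : ℂ) * d‖) hc2 hc1.continuousAt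
        rw [ContinuousAt] at hcc
        have hw' : z₂ + (ρ : ℂ) * d = 0 := hw
        simpa [Function.comp_def, hw', Real.zero_rpow hp0.ne'] using hcc
      have h2 := (Complex.continuous_ofReal.continuousAt.tendsto.comp h1).mul_const d
      simpa using h2
    refine (htend.mono_left nhdsWithin_le_nhds).congr' ?_
    filter_upwards [self_mem_nhdsWithin] with σ hσ
    exact (hslope σ hσ).symm
  · -- nondegenerate point
    have hA : 0 < ‖w‖ := norm_pos_iff.mpr hw
    have hnsq : Complex.normSq w ≠ 0 := (Complex.normSq_pos.2 hw).ne'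
    -- derivative of normSq along the line
    have hre : HasDerivAt (fun σ : ℝ => z₂.re + σ * d.re) d.re ρ :=
      (hasDerivAt_mul_const d.re).const_add z₂.re
    have him : HasDerivAt (fun σ : ℝ => z₂.im + σ * d.im) d.im ρ :=
      (hasDerivAt_mul_const d.im).const_add z₂.im
    have hsum := (hre.pow 2).add (him.pow 2)
    have hfun : (fun σ : ℝ => (z₂.re + σ * d.re) ^ 2 + (z₂.im + σ * d.im) ^ 2)
        = fun σ : ℝ => Complex.normSq (z₂ + (σ : ℂ) * d) := by
      funext σ
      simp [Complex.normSq_apply, Complex.add_re, Complex.add_im, Complex.mul_re,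
        Complex.mul_im, Complex.ofReal_re, Complex.ofReal_im]
      ring
    rw [show ((fun σ : ℝ => z₂.re + σ * d.re) ^ 2 + (fun σ : ℝ => z₂.im + σ * d.im) ^ 2) = (fun σ : ℝ => (z₂.re + σ * d.re) ^ 2 + (z₂.im + σ * d.im) ^ 2) from rfl, hfun] at hsum
    have ha2 : HasDerivAt (fun σ : ℝ => Complex.normSq (z₂ + (σ : ℂ) * d))
        (2 * ((starRingEnd ℂ) w * d).re) ρ := by
      refine hsum.congr_deriv ?_
      rw [hw_def]
      simp only [Complex.mul_re, Complex.conj_re, Complex.conj_im, Complex.add_re,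
        Complex.add_im, Complex.mul_im, Complex.ofReal_re, Complex.ofReal_im]
      push_cast
      ring
    have hrpow : HasDerivAt (fun x : ℝ => x ^ (p / 2))
        ((p / 2) * Complex.normSq w ^ (p / 2 - 1)) (Complex.normSq w) :=
      Real.hasDerivAt_rpow_const (Or.inl hnsq)
    have hr := (hrpow.comp ρ ha2)
    have hcast := hr.ofReal_comp
    have hprod := hcast.mul hξ
    have hnormSq_rpow : ∀ z : ℂ, Complex.normSq z ^ (p / 2) = ‖z‖ ^ p := by
      intro z
      rw [← Complex.sq_norm, ← Real.rpow_natCast (‖z‖) 2,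
        ← Real.rpow_mul (norm_nonneg z)]
      norm_num
      ring_nf
    have hfun2 : (fun σ : ℝ => ((Complex.normSq (z₂ + (σ : ℂ) * d) ^ (p / 2) : ℝ) : ℂ)
        * (z₂ + (σ : ℂ) * d)) = fun σ : ℝ => powerNonlin p (z₂ + (σ : ℂ) * d) := by
      funext σ
      rw [powerNonlin, hnormSq_rpow]
    simp only [Function.comp_def, Pi.mul_def] at hprod
    rw [hfun2] at hprod
    refine hprod.congr_deriv ?_
    beta_reduce
    rw [hnormSq_rpow]
    exact deriv_value p w d hw

/-- Fundamental-theorem-of-calculus representation of the difference of power nonlinearities: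
`|z₁|^p z₁ − |z₂|^p z₂ = ((p+2)/2)(z₁ − z₂)∫₀¹ |ξ|^p dρ + (p/2)(z̄₁ − z̄₂)∫₀¹ |ξ|^{p−2} ξ² dρ`,
where `ξ(ρ) = (1 − ρ)z₂ + ρ z₁`. -/
theorem powerNonlin_difference_formula (p : ℝ) (hp : 1 ≤ p) (z₁ z₂ : ℂ) :
    powerNonlin p z₁ - powerNonlin p z₂ =
      (((p + 2) / 2 : ℝ) : ℂ) * (z₁ - z₂) *
        (∫ ρ in (0 : ℝ)..1,
          ((‖(1 - (ρ : ℂ)) * z₂ + (ρ : ℂ) * z₁‖ ^ p : ℝ) : ℂ)) +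
      ((p / 2 : ℝ) : ℂ) * (starRingEnd ℂ z₁ - starRingEnd ℂ z₂) *
        (∫ ρ in (0 : ℝ)..1, powerQuad p ((1 - (ρ : ℂ)) * z₂ + (ρ : ℂ) * z₁)) := by
  have hp0 : 0 < p := lt_of_lt_of_le one_pos hp
  set d : ℂ := z₁ - z₂ with hd
  have hfun : ∀ ρ : ℝ, (1 - (ρ : ℂ)) * z₂ + (ρ : ℂ) * z₁ = z₂ + (ρ : ℂ) * d := by
    intro ρ; rw [hd]; ring
  simp only [hfun]
  have hconj : starRingEnd ℂ z₁ - starRingEnd ℂ z₂ = starRingEnd ℂ d := by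
    rw [hd, map_sub]
  rw [hconj]
  set c₁ : ℂ := (((p + 2) / 2 : ℝ) : ℂ) with hc₁
  set c₂ : ℂ := ((p / 2 : ℝ) : ℂ) with hc₂
  have hcontline : Continuous (fun ρ : ℝ => z₂ + (ρ : ℂ) * d) := by continuity
  have hcont1 : Continuous (fun ρ : ℝ => ((‖z₂ + (ρ : ℂ) * d‖ ^ p : ℝ) : ℂ)) :=
    (continuous_absRpow p hp0.le).comp hcontline
  have hcont2 : Continuous (fun ρ : ℝ => powerQuad p (z₂ + (ρ : ℂ) * d)) :=
    (continuous_powerQuad p hp).comp hcontline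
  have hint1 : IntervalIntegrable
      (fun ρ : ℝ => c₁ * d * ((‖z₂ + (ρ : ℂ) * d‖ ^ p : ℝ) : ℂ))
      MeasureTheory.volume 0 1 :=
    (continuous_const.mul hcont1).intervalIntegrable 0 1
  have hint2 : IntervalIntegrable
      (fun ρ : ℝ => c₂ * starRingEnd ℂ d * powerQuad p (z₂ + (ρ : ℂ) * d))
      MeasureTheory.volume 0 1 :=
    (continuous_const.mul hcont2).intervalIntegrable 0 1
  have hFTC := intervalIntegral.integral_eq_sub_of_hasDerivAt
    (f := fun σ : ℝ => powerNonlin p (z₂ + (σ : ℂ) * d))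
    (f' := fun ρ : ℝ => c₁ * d * ((‖z₂ + (ρ : ℂ) * d‖ ^ p : ℝ) : ℂ)
      + c₂ * starRingEnd ℂ d * powerQuad p (z₂ + (ρ : ℂ) * d))
    (fun ρ _ => hasDerivAt_line p hp z₂ d ρ) (hint1.add hint2)
  have he1 : z₂ + ((1 : ℝ) : ℂ) * d = z₁ := by rw [hd]; push_cast; ring
  have he0 : z₂ + ((0 : ℝ) : ℂ) * d = z₂ := by push_cast; ring
  simp only [he1, he0] at hFTC
  rw [← hFTC, intervalIntegral.integral_add hint1 hint2,
    intervalIntegral.integral_const_mul, intervalIntegral.integral_const_mul]
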